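/- For the n-lane totally asymmetric model of Example with p = 1, q = 0 and drifts d_i > 0 (flux on lane i given by d_i α(1-α)), the equilibrium lane densities are ρ̃_i(ρ) = (ρ-i)1_{[i,i+1]}(ρ) + 1_{ρ>i+1}, and the total flux function is G^n(ρ) = Σ_{i=0}^{n-1} d_i (ρ-i)(i+1-ρ) 1_{(i,i+1)}(ρ) for ρ ∈ [0,n]. G^n is continuous on [0,n], vanishes exactly at integer points, and attains local maximum value d_i/4 at ρ = i + 1/2. -/

import Mathlib

theorem nlane_totally_asymmetric_flux (n : ℕ) (hn : 0 < n)
    (d : ℕ → ℝ) (hd : ∀ i, 0 < d i) :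
    let ρt : ℕ → ℝ → ℝ := fun i ρ => min (max (ρ - (i : ℝ)) 0) 1
    let G : ℝ → ℝ := fun ρ => ∑ i ∈ Finset.range n, d i * ρt i ρ * (1 - ρt i ρ)
    (∀ ρ : ℝ, G ρ = ∑ i ∈ Finset.range n,
      d i * (ρ - (i : ℝ)) * ((i : ℝ) + 1 - ρ) *
        (if (i : ℝ) < ρ ∧ ρ < (i : ℝ) + 1 then 1 else 0)) ∧
    Continuous G ∧
    (∀ ρ ∈ Set.Icc (0:ℝ) (n : ℝ), (G ρ = 0 ↔ ∃ k : ℕ, k ≤ n ∧ ρ = (k : ℝ))) ∧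
    (∀ i < n, G ((i : ℝ) + 1 / 2) = d i / 4 ∧ IsLocalMax G ((i : ℝ) + 1 / 2)) := by
  intro ρt G
  -- basic facts about ρt
  have ht0 : ∀ i (ρ : ℝ), 0 ≤ ρt i ρ := by
    intro i ρ; simp only [ρt]
    exact le_min (le_max_right _ _) one_pos.le
  have ht1 : ∀ i (ρ : ℝ), ρt i ρ ≤ 1 := fun i ρ => min_le_right _ _
  have htlow : ∀ (i : ℕ) (ρ : ℝ), ρ ≤ (i : ℝ) → ρt i ρ = 0 := by
    intro i ρ h; simp only [ρt]
    rw [max_eq_right (by linarith), min_eq_left one_pos.le]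
  have hthigh : ∀ (i : ℕ) (ρ : ℝ), (i : ℝ) + 1 ≤ ρ → ρt i ρ = 1 := by
    intro i ρ h; simp only [ρt]
    rw [max_eq_left (by linarith), min_eq_right (by linarith)]
  have htmid : ∀ (i : ℕ) (ρ : ℝ), (i : ℝ) ≤ ρ → ρ ≤ (i : ℝ) + 1 → ρt i ρ = ρ - i := by
    intro i ρ h1 h2; simp only [ρt]
    rw [max_eq_left (by linarith), min_eq_left (by linarith)]
  -- termwise identity
  have hterm : ∀ i (ρ : ℝ), d i * ρt i ρ * (1 - ρt i ρ) =
      d i * (ρ - (i : ℝ)) * ((i : ℝ) + 1 - ρ) *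
        (if (i : ℝ) < ρ ∧ ρ < (i : ℝ) + 1 then 1 else 0) := by
    intro i ρ
    rcases le_or_gt ρ (i : ℝ) with h1 | h1
    · rw [htlow i ρ h1, if_neg (by push_neg; intro h; linarith)]; ring
    · rcases le_or_gt ((i : ℝ) + 1) ρ with h2 | h2
      · rw [hthigh i ρ h2, if_neg (by push_neg; intro h; linarith)]; ring
      · rw [htmid i ρ h1.le h2.le, if_pos ⟨h1, h2⟩]; ring
  -- nonnegativity of terms
  have htermnn : ∀ i (ρ : ℝ), 0 ≤ d i * ρt i ρ * (1 - ρt i ρ) := by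
    intro i ρ
    exact mul_nonneg (mul_nonneg (hd i).le (ht0 i ρ)) (by linarith [ht1 i ρ])
  -- vanishing of other terms
  have hzero : ∀ (i j : ℕ), j ≠ i → ∀ ρ : ℝ, (i : ℝ) ≤ ρ → ρ ≤ (i : ℝ) + 1 →
      d j * ρt j ρ * (1 - ρt j ρ) = 0 := by
    intro i j hji ρ h1 h2
    rcases lt_or_gt_of_ne hji with h | h
    · have : (j : ℝ) + 1 ≤ ρ := by
        have : (j : ℝ) + 1 ≤ (i : ℝ) := by exact_mod_cast Nat.succ_le_of_lt h
        linarith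
      rw [hthigh j ρ this]; ring
    · have : ρ ≤ (j : ℝ) := by
        have : (i : ℝ) + 1 ≤ (j : ℝ) := by exact_mod_cast Nat.succ_le_of_lt h
        linarith
      rw [htlow j ρ this]; ring
  refine ⟨fun ρ => Finset.sum_congr rfl fun i _ => hterm i ρ, ?_, ?_, ?_⟩
  · -- continuity
    apply continuous_finset_sum
    intro i _
    have h1 : Continuous (fun ρ : ℝ => ρt i ρ) := by
      simp only [ρt]
      exact ((continuous_id.sub continuous_const).max continuous_const).min
        continuous_const
    exact (continuous_const.mul h1).mul (continuous_const.sub h1)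
  · -- zeros
    intro ρ hρ
    constructor
    · intro hG
      have hall : ∀ i ∈ Finset.range n, d i * ρt i ρ * (1 - ρt i ρ) = 0 :=
        (Finset.sum_eq_zero_iff_of_nonneg (fun i _ => htermnn i ρ)).1 hG
      by_contra hcon
      push_neg at hcon
      set m : ℤ := ⌊ρ⌋ with hm
      have hm0 : 0 ≤ m := Int.floor_nonneg.2 hρ.1
      have hmρ : (m : ℝ) ≤ ρ := Int.floor_le ρ
      have hρm : ρ < (m : ℝ) + 1 := Int.lt_floor_add_one ρ
      have hne : ρ ≠ (m : ℝ) := by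
        intro h
        have hk : (m.toNat : ℝ) = (m : ℝ) := by exact_mod_cast Int.toNat_of_nonneg hm0
        have hkn : m.toNat ≤ n := by
          have : (m : ℝ) ≤ (n : ℝ) := by rw [← h]; exact hρ.2
          have : m ≤ (n : ℤ) := by exact_mod_cast this
          omega
        exact hcon m.toNat hkn (by rw [h, hk])
      have hlt : (m : ℝ) < ρ := lt_of_le_of_ne hmρ (Ne.symm hne)
      have hmn : m < (n : ℤ) := by
        have : (m : ℝ) < (n : ℝ) := lt_of_lt_of_le hlt hρ.2
        exact_mod_cast this
      set i : ℕ := m.toNat with hi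
      have hic : (i : ℝ) = (m : ℝ) := by exact_mod_cast Int.toNat_of_nonneg hm0
      have hin : i ∈ Finset.range n := Finset.mem_range.2 (by omega)
      have := hall i hin
      rw [htmid i ρ (by rw [hic]; exact hmρ) (by rw [hic]; linarith)] at this
      have hp : 0 < d i * (ρ - (i : ℝ)) * (1 - (ρ - (i : ℝ))) := by
        have h1 : 0 < ρ - (i : ℝ) := by rw [hic]; linarith
        have h2 : 0 < 1 - (ρ - (i : ℝ)) := by rw [hic]; linarith
        have := hd i; positivity
      linarith
    · rintro ⟨k, hk, rfl⟩
      apply Finset.sum_eq_zero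
      intro i _
      rcases le_or_gt k i with h | h
      · rw [htlow i _ (by exact_mod_cast h)]; ring
      · rw [hthigh i _ (by exact_mod_cast Nat.succ_le_of_lt h)]; ring
  · -- local maxima
    intro i hi
    have hval : ∀ ρ : ℝ, (i : ℝ) ≤ ρ → ρ ≤ (i : ℝ) + 1 →
        G ρ = d i * (ρ - (i : ℝ)) * (1 - (ρ - (i : ℝ))) := by
      intro ρ h1 h2
      simp only [G]
      rw [Finset.sum_eq_single_of_mem i (Finset.mem_range.2 hi)
        (fun j _ hj => hzero i j hj ρ h1 h2), htmid i ρ h1 h2]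
    have hGhalf : G ((i : ℝ) + 1 / 2) = d i / 4 := by
      rw [hval _ (by linarith) (by linarith)]; ring
    refine ⟨hGhalf, ?_⟩
    have hnhds : Set.Ioo ((i : ℝ)) ((i : ℝ) + 1) ∈ nhds ((i : ℝ) + 1 / 2) :=
      isOpen_Ioo.mem_nhds ⟨by linarith, by linarith⟩
    apply Filter.eventually_of_mem hnhds
    intro ρ hρ
    rw [hGhalf, hval ρ hρ.1.le hρ.2.le]
    nlinarith [sq_nonneg (ρ - (i : ℝ) - 1 / 2), (hd i).le]
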